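/- Under the time-limited two-state discrimination setup with arbitrary priors, P_succ ≤ p_max + (γt/2)·[tr(H·|p_min ρ̃_min - p_max ρ̃_max|) + p_min tr(H ρ̃_min) - p_max tr(H ρ̃_max)], where ρ̃ₓ = ρₓ ⊗ |x_max⟩⟨x_max| and H ≥ 0. -/

import Mathlib

open Matrix ComplexOrder

/-- The positive part `A⁺` of a Hermitian matrix `A`, obtained from its spectral
decomposition by keeping only the nonnegative eigenvalues. -/
noncomputable def posPart' {ι : Type*} [Fintype ι] [DecidableEq ι]
    (A : Matrix ι ι ℂ) (hA : A.IsHermitian) : Matrix ι ι ℂ :=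
  (hA.eigenvectorUnitary : Matrix ι ι ℂ) *
    Matrix.diagonal (fun i => ((max (hA.eigenvalues i) 0 : ℝ) : ℂ)) *
    star (hA.eigenvectorUnitary : Matrix ι ι ℂ)

/-- The absolute value `|A|` of a Hermitian matrix `A`, obtained from its spectral
decomposition by taking absolute values of the eigenvalues. -/
noncomputable def absPart' {ι : Type*} [Fintype ι] [DecidableEq ι]
    (A : Matrix ι ι ℂ) (hA : A.IsHermitian) : Matrix ι ι ℂ :=
  (hA.eigenvectorUnitary : Matrix ι ι ℂ) *
    Matrix.diagonal (fun i => ((|hA.eigenvalues i| : ℝ) : ℂ)) *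
    star (hA.eigenvectorUnitary : Matrix ι ι ℂ)
open Kronecker

/-- The ancilla projector `|x⟩⟨x|` on the two-dimensional ancilla. -/
noncomputable def ancProj (x : Fin 2) : Matrix (Fin 2) (Fin 2) ℂ :=
  Matrix.single x x 1

/-- `ρ̃ = ρ ⊗ |x_max⟩⟨x_max|` with the ancilla initialized to `|x_max⟩ = |0⟩`. -/
noncomputable def tilde {d : ℕ} (ρ : Matrix (Fin d) (Fin d) ℂ) :
    Matrix (Fin d × Fin 2) (Fin d × Fin 2) ℂ :=
  ρ ⊗ₖ ancProj 0

/-! ### Auxiliary scalar lemmas -/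

private lemma one_sub_cos_eq (x : ℝ) : 1 - Real.cos x = 2 * Real.sin (x/2)^2 := by
  have h2 := Real.cos_two_mul' (x/2)
  have hx : 2*(x/2) = x := by ring
  rw [hx] at h2
  have h3 := Real.cos_sq' (x/2)
  linarith

set_option maxHeartbeats 1000000 in
private lemma key5 (z : ℝ) (h1 : 0.6283 ≤ z) (h2 : z ≤ 1.5516) :
    1.5916*z ≤ z^2 - z^4/8 + z^6/256 + 1 := by
  nlinarith [sq_nonneg (z-1), sq_nonneg (z^2-1), mul_nonneg (sub_nonneg.2 h1) (sub_nonneg.2 h2),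
    sq_nonneg (z^3-1), sq_nonneg (z^2-z),
    mul_nonneg (mul_nonneg (sub_nonneg.2 h1) (sub_nonneg.2 h2)) (sq_nonneg z),
    sq_nonneg (z-1.1),
    mul_nonneg (mul_nonneg (sub_nonneg.2 h1) (sub_nonneg.2 h2)) (sq_nonneg (z-1))]

set_option maxHeartbeats 1000000 in
private lemma key3a (y : ℝ) (h1 : 0.4774 ≤ y) (h2 : y ≤ 0.5) :
    4*(y - y^3/6 + 5*y^4/96)^2 ≤ 1.9098*y := by
  nlinarith [mul_nonneg (sub_nonneg.2 h1) (sub_nonneg.2 h2), sq_nonneg (y - 0.49),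
    sq_nonneg (y^2 - 0.24),
    mul_nonneg (mul_nonneg (sub_nonneg.2 h1) (sub_nonneg.2 h2)) (sq_nonneg y), sq_nonneg y]

set_option maxHeartbeats 1000000 in
private lemma key3b (y : ℝ) (h1 : 0.8584 ≤ y) (h2 : y ≤ 1.0473) :
    1 - 0.9549*y ≤ y^2 - y^4/8 + y^6/256 := by
  nlinarith [mul_nonneg (sub_nonneg.2 h1) (sub_nonneg.2 h2), sq_nonneg (y-1), sq_nonneg (y^2-1),
    mul_nonneg (mul_nonneg (sub_nonneg.2 h1) (sub_nonneg.2 h2)) (sq_nonneg y)]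

private lemma cube_bound {w : ℝ} (h0 : 0 < w) (h1 : w ≤ 1) : 0 ≤ w - w^3/4 := by
  have hw2 : w^2 ≤ 1 := by nlinarith
  nlinarith [mul_nonneg h0.le (sub_nonneg.2 hw2)]

private lemma pibounds : (3.1415:ℝ) < Real.pi ∧ Real.pi < 3.1416 :=
  ⟨by linarith [Real.pi_gt_d6], by linarith [Real.pi_lt_d6]⟩

open Real in
set_option maxHeartbeats 800000 in
private lemma two_sub_cos_le_five {x : ℝ} (hx : 0 ≤ x) :
    2 - 2 * Real.cos x ≤ 5 / π * x := by
  obtain ⟨hπ1, hπ2⟩ := pibounds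
  have hπ0 : (0:ℝ) < π := by linarith
  have h5l : (1.5915:ℝ) < 5/π := by rw [lt_div_iff₀ hπ0]; nlinarith
  have h5u : 5/π < 1.5916 := by rw [div_lt_iff₀ hπ0]; nlinarith
  have hkey := one_sub_cos_eq x
  rcases le_or_gt x (5/π) with h1 | h1
  · have hc := Real.one_sub_sq_div_two_le_cos (x := x)
    have : x^2 ≤ 5/π * x := by nlinarith
    nlinarith
  rcases le_or_gt (4*π/5) x with h2 | h2
  · have hc := Real.neg_one_le_cos x
    have : (4:ℝ) ≤ 5/π * x := by
      rw [div_mul_eq_mul_div, le_div_iff₀ hπ0]; nlinarith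
    linarith
  · set z := π - x with hz
    have hz1 : 0.6283 ≤ z := by rw [hz]; nlinarith
    have hz2 : z ≤ 1.5516 := by rw [hz]; nlinarith
    have hcz : Real.cos x = - Real.cos z := by
      have h := Real.cos_pi_sub x
      rw [← hz] at h; linarith
    have hkz := one_sub_cos_eq z
    have hy1 : 0 < z/2 := by linarith
    have hy2 : z/2 ≤ 1 := by linarith
    have hsin : z/2 - (z/2)^3/4 < Real.sin (z/2) := by
      have := Real.sin_gt_sub_cube hy1; nlinarith [pow_pos hy1 3]
    have hb : (0:ℝ) ≤ z/2 - (z/2)^3/4 := cube_bound hy1 hy2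
    have hs2 : (z/2 - (z/2)^3/4)^2 ≤ Real.sin (z/2)^2 := pow_le_pow_left₀ hb hsin.le 2
    have key := key5 z hz1 hz2
    have h5z : 5/π*z ≤ 1.5916*z := by nlinarith
    have hexp : 5/π * x = 5 - 5/π*z := by rw [hz]; field_simp; ring
    nlinarith [hs2]

open Real in
set_option maxHeartbeats 800000 in
private lemma two_sub_cos_le_three {x : ℝ} (hx : 0 ≤ x) (hgap : ¬ (1 < x ∧ x < 4)) :
    2 - 2 * Real.cos x ≤ 3 / π * x := by
  obtain ⟨hπ1, hπ2⟩ := pibounds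
  have hπ0 : (0:ℝ) < π := by linarith
  have hkey := one_sub_cos_eq x
  rcases le_or_gt x (3/π) with h1 | h1
  · have hc := Real.one_sub_sq_div_two_le_cos (x := x)
    have : x^2 ≤ 3/π * x := by nlinarith
    nlinarith
  push_neg at hgap
  rcases le_or_gt x 1 with hx1 | hx1
  · rw [div_lt_iff₀ hπ0] at h1
    have hyl : 0.4774 ≤ x/2 := by nlinarith
    have hyu : x/2 ≤ 0.5 := by linarith
    have hsinpos : 0 < Real.sin (x/2) :=
      Real.sin_pos_of_pos_of_le_one (by linarith) (by linarith)
    have hbd := Real.sin_bound (x := x/2) (by rw [abs_of_nonneg (by linarith)]; linarith)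
    rw [abs_of_nonneg (by linarith : (0:ℝ) ≤ x/2)] at hbd
    have hub : Real.sin (x/2) ≤ x/2 - (x/2)^3/6 + 5*(x/2)^4/96 := by
      have h' := abs_sub_le_iff.1 hbd
      have h4 : 0 ≤ (x/2)^4 * (5/96 - (x/2)/100) := mul_nonneg (by positivity) (by linarith)
      nlinarith [h'.1, h4]
    have hs2 : Real.sin (x/2)^2 ≤ (x/2 - (x/2)^3/6 + 5*(x/2)^4/96)^2 :=
      pow_le_pow_left₀ hsinpos.le hub 2
    have key := key3a (x/2) hyl hyu
    have h3y : 1.9098*(x/2) ≤ 3/π*x := by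
      rw [div_mul_eq_mul_div, le_div_iff₀ hπ0]; nlinarith
    nlinarith
  have hx4 : 4 ≤ x := hgap hx1
  rcases le_or_gt x (4*π/3) with h2 | h2
  · set y := x - π with hyd
    have hyl : 0.8584 ≤ y := by rw [hyd]; nlinarith
    have hyu : y ≤ 1.0473 := by rw [hyd]; nlinarith
    have hcz : Real.cos x = - Real.cos y := by
      have h := Real.cos_pi_sub x
      have h2' : Real.cos (x - π) = Real.cos (π - x) := by
        rw [← Real.cos_neg (x - π)]
        have : -(x - π) = π - x := by ring
        rw [this]
      rw [← hyd] at h2'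
      rw [h2'] at *
      linarith
    have hky := one_sub_cos_eq y
    have hy1 : 0 < y/2 := by linarith
    have hy2 : y/2 ≤ 1 := by linarith
    have hsin : y/2 - (y/2)^3/4 < Real.sin (y/2) := by
      have := Real.sin_gt_sub_cube hy1; nlinarith [pow_pos hy1 3]
    have hb : (0:ℝ) ≤ y/2 - (y/2)^3/4 := cube_bound hy1 hy2
    have hs2 : (y/2 - (y/2)^3/4)^2 ≤ Real.sin (y/2)^2 := pow_le_pow_left₀ hb hsin.le 2
    have key := key3b y hyl hyu
    have h3y : 0.9549*y ≤ 3/π*y := by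
      apply mul_le_mul_of_nonneg_right _ (by linarith)
      rw [le_div_iff₀ hπ0]; nlinarith
    have hexp : 3/π * x = 3 + 3/π*y := by rw [hyd]; field_simp; ring
    nlinarith
  · have hc := Real.neg_one_le_cos x
    have : (4:ℝ) ≤ 3/π * x := by
      rw [div_mul_eq_mul_div, le_div_iff₀ hπ0]; nlinarith
    linarith

/-! ### Auxiliary matrix lemmas -/

section MatrixAux

variable {ι : Type*} [Fintype ι] [DecidableEq ι]

private lemma diag_entry_nonneg {M : Matrix ι ι ℂ} (h : M.PosSemidef) (i : ι) :
    0 ≤ M i i := by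
  exact h.diag_nonneg

private lemma trace_nonneg' {M : Matrix ι ι ℂ} (h : M.PosSemidef) : 0 ≤ M.trace := by
  rw [Matrix.trace]
  exact Finset.sum_nonneg fun i _ => diag_entry_nonneg h i

private lemma trace_mul_nonneg' {X Y : Matrix ι ι ℂ} (hX : X.PosSemidef)
    (hY : Y.PosSemidef) : 0 ≤ (X * Y).trace := by
  have hs := hX.1.spectral_theorem
  rw [Unitary.conjStarAlgAut_apply] at hs
  have hZ := hY.conjTranspose_mul_mul_same (hX.1.eigenvectorUnitary : Matrix ι ι ℂ)
  rw [hs]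
  simp only [Matrix.mul_assoc]
  rw [Matrix.trace_mul_comm]
  simp only [Matrix.mul_assoc]
  rw [Matrix.trace]
  refine Finset.sum_nonneg fun i _ => ?_
  rw [Matrix.diag_apply]
  rw [Matrix.diagonal_mul]
  refine mul_nonneg ?_ ?_
  · exact Complex.zero_le_real.2 (hX.eigenvalues_nonneg i)
  · have := hZ.diag_nonneg (i := i)
    simpa only [Matrix.mul_assoc, Matrix.star_eq_conjTranspose] using this

private lemma conj_diag_mul {V : Matrix ι ι ℂ} (hV : Vᴴ * V = 1) (f g : ι → ℂ) :
    (V * diagonal f * Vᴴ) * (V * diagonal g * Vᴴ) = V * diagonal (fun i => f i * g i) * Vᴴ := by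
  have h : diagonal f * (Vᴴ * V) * diagonal g = diagonal (fun i => f i * g i) := by
    rw [hV, Matrix.mul_one, Matrix.diagonal_mul_diagonal]
  calc (V * diagonal f * Vᴴ) * (V * diagonal g * Vᴴ)
      = V * (diagonal f * (Vᴴ * V) * diagonal g) * Vᴴ := by
        simp only [Matrix.mul_assoc]
    _ = V * diagonal (fun i => f i * g i) * Vᴴ := by rw [h]

private lemma conj_diag_ct (V : Matrix ι ι ℂ) (f : ι → ℂ) :
    (V * diagonal f * Vᴴ)ᴴ = V * diagonal (fun i => starRingEnd ℂ (f i)) * Vᴴ := by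
  simp only [Matrix.conjTranspose_mul, Matrix.conjTranspose_conjTranspose,
    Matrix.diagonal_conjTranspose, Matrix.mul_assoc]
  rfl

private lemma pi_mul_spectral {P W : Matrix ι ι ℂ} (hW : Wᴴ * W = 1) {a b : ι → ℂ}
    (h0 : P * (W * diagonal a * Wᴴ) = 0) (hab : ∀ k, a k = 0 → b k = 0) :
    P * (W * diagonal b * Wᴴ) = 0 := by
  have hMa : (P * W) * diagonal a = 0 := by
    have h1 : P * (W * diagonal a * Wᴴ) * W = 0 := by rw [h0, Matrix.zero_mul]
    calc (P * W) * diagonal a = (P * W) * diagonal a * 1 := by rw [Matrix.mul_one]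
      _ = P * (W * diagonal a * Wᴴ) * W := by rw [← hW]; simp only [Matrix.mul_assoc]
      _ = 0 := h1
  have hentry : ∀ i k, (P * W) i k * a k = 0 := by
    intro i k
    have := congrFun (congrFun hMa i) k
    rwa [Matrix.mul_diagonal] at this
  have hMb : (P * W) * diagonal b = 0 := by
    ext i k
    rw [Matrix.mul_diagonal]
    rcases eq_or_ne (a k) 0 with h | h
    · rw [hab k h, mul_zero]; rfl
    · have h' := hentry i k
      rcases mul_eq_zero.1 h' with h'' | h''
      · rw [h'', zero_mul]; rfl
      · exact absurd h'' h
  calc P * (W * diagonal b * Wᴴ) = ((P * W) * diagonal b) * Wᴴ := by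
        simp only [Matrix.mul_assoc]
    _ = 0 := by rw [hMb, Matrix.zero_mul]

private lemma trace_diag_right (M : Matrix ι ι ℂ) (g : ι → ℂ) :
    (M * diagonal g).trace = ∑ k, M k k * g k := by
  simp [Matrix.trace, Matrix.diag, Matrix.mul_diagonal]

end MatrixAux

set_option maxHeartbeats 2000000 in
open scoped Classical in
/-- Average-energy bound for arbitrary priors (Theorem `avgEnergyTwoStates`):
`P_succ ≤ p_max + (γ t / 2)[tr(H |p_min ρ̃_min - p_max ρ̃_max|)
  + p_min tr(H ρ̃_min) - p_max tr(H ρ̃_max)]` with `ρ̃ₓ = ρₓ ⊗ |x_max⟩⟨x_max|`. -/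
theorem two_state_avgEnergy_bound {d : ℕ}
    (ρmax ρmin : Matrix (Fin d) (Fin d) ℂ)
    (hρmax : ρmax.PosSemidef) (hρmin : ρmin.PosSemidef)
    (htrmax : ρmax.trace = 1) (htrmin : ρmin.trace = 1)
    (pmax pmin : ℝ) (h0 : 0 ≤ pmin) (hp : pmin ≤ pmax) (hsum : pmax + pmin = 1)
    (t : ℝ) (ht : 0 ≤ t)
    (E : Fin d × Fin 2 → ℝ) (hE : ∀ n, 0 ≤ E n)
    (v : Fin d × Fin 2 → Fin d × Fin 2 → ℂ)
    (hv : ∀ i j, star (v i) ⬝ᵥ v j = if i = j then 1 else 0)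
    (H : Matrix (Fin d × Fin 2) (Fin d × Fin 2) ℂ)
    (hH : H = ∑ n, (E n : ℂ) • vecMulVec (v n) (star (v n)))
    (U : Matrix (Fin d × Fin 2) (Fin d × Fin 2) ℂ)
    (hU : U = NormedSpace.exp ((-(Complex.I * (t : ℂ))) • H))
    (hA : ((pmin : ℂ) • tilde ρmin - (pmax : ℂ) • tilde ρmax).IsHermitian) :
    (pmax : ℂ) * (((1 : Matrix (Fin d) (Fin d) ℂ) ⊗ₖ ancProj 0) *
          (U * tilde ρmax * Uᴴ)).trace +
      (pmin : ℂ) * (((1 : Matrix (Fin d) (Fin d) ℂ) ⊗ₖ ancProj 1) *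
          (U * tilde ρmin * Uᴴ)).trace ≤
    (pmax : ℂ) +
      (((if ∃ n, 1 < t * E n ∧ t * E n < 4 then 5 / Real.pi else 3 / Real.pi) *
          t / 2 : ℝ) : ℂ) *
        ((H * absPart' ((pmin : ℂ) • tilde ρmin - (pmax : ℂ) • tilde ρmax) hA).trace +
          (pmin : ℂ) * (H * tilde ρmin).trace -
          (pmax : ℂ) * (H * tilde ρmax).trace) := by
  set A : Matrix (Fin d × Fin 2) (Fin d × Fin 2) ℂ :=
    (pmin : ℂ) • tilde ρmin - (pmax : ℂ) • tilde ρmax with hAdef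
  set g : ℝ := if ∃ n, 1 < t * E n ∧ t * E n < 4 then 5 / Real.pi else 3 / Real.pi with hg
  have hgs : ∀ k : Fin d × Fin 2, 2 - 2 * Real.cos (t * E k) ≤ g * (t * E k) := by
    intro k
    by_cases hc : ∃ n, 1 < t * E n ∧ t * E n < 4
    · rw [hg, if_pos hc]
      exact two_sub_cos_le_five (mul_nonneg ht (hE k))
    · rw [hg, if_neg hc]
      exact two_sub_cos_le_three (mul_nonneg ht (hE k)) (fun hh => hc ⟨k, hh⟩)
  set Pi0 : Matrix (Fin d × Fin 2) (Fin d × Fin 2) ℂ :=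
    (1 : Matrix (Fin d) (Fin d) ℂ) ⊗ₖ ancProj 0 with hPi0def
  set Pi1 : Matrix (Fin d × Fin 2) (Fin d × Fin 2) ℂ :=
    (1 : Matrix (Fin d) (Fin d) ℂ) ⊗ₖ ancProj 1 with hPi1def
  have hanc10 : ancProj 1 * ancProj 0 = 0 := by
    have h : Matrix.single (1 : Fin 2) (1 : Fin 2) (1 : ℂ) * Matrix.single 0 0 1 = 0 :=
      Matrix.single_mul_single_of_ne 1 (1 : Fin 2) (1 : Fin 2) (0 : Fin 2) (by decide) 1
    exact h
  have hancH : ∀ x : Fin 2, (ancProj x)ᴴ = ancProj x := by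
    intro x
    ext i j
    simp only [ancProj, Matrix.conjTranspose_apply, Matrix.single, Matrix.of_apply]
    split_ifs with hc1 hc2 hc2
    · exact star_one ℂ
    · exact absurd ⟨hc1.2, hc1.1⟩ hc2
    · exact absurd ⟨hc2.2, hc2.1⟩ hc1
    · exact star_zero ℂ
  have hancsum : ancProj 0 + ancProj 1 = (1 : Matrix (Fin 2) (Fin 2) ℂ) := by
    ext i j
    fin_cases i <;> fin_cases j <;>
      simp [ancProj, Matrix.single, Matrix.one_apply, Matrix.of_apply]
  have hancidem : ∀ x : Fin 2, ancProj x * ancProj x = ancProj x := by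
    intro x
    rw [ancProj, Matrix.single_mul_single_same, mul_one]
  have hPi1H : Pi1ᴴ = Pi1 := by
    rw [hPi1def]
    ext ⟨i, x⟩ ⟨j, y⟩
    simp only [Matrix.conjTranspose_apply, Matrix.kroneckerMap_apply, star_mul']
    rw [← Matrix.conjTranspose_apply, ← Matrix.conjTranspose_apply, hancH 1,
      Matrix.conjTranspose_one]
    all_goals exact mul_comm _ _
  have hPi0H : Pi0ᴴ = Pi0 := by
    rw [hPi0def]
    ext ⟨i, x⟩ ⟨j, y⟩
    simp only [Matrix.conjTranspose_apply, Matrix.kroneckerMap_apply, star_mul']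
    rw [← Matrix.conjTranspose_apply, ← Matrix.conjTranspose_apply, hancH 0,
      Matrix.conjTranspose_one]
    all_goals exact mul_comm _ _
  have hPi1idem : Pi1 * Pi1 = Pi1 := by
    rw [hPi1def, ← Matrix.mul_kronecker_mul, Matrix.one_mul, hancidem 1]
  have hPi0idem : Pi0 * Pi0 = Pi0 := by
    rw [hPi0def, ← Matrix.mul_kronecker_mul, Matrix.one_mul, hancidem 0]
  have hPi1psd : Pi1.PosSemidef := by
    have h := Matrix.posSemidef_conjTranspose_mul_self Pi1
    rwa [hPi1H, hPi1idem] at h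
  have hPi0psd : Pi0.PosSemidef := by
    have h := Matrix.posSemidef_conjTranspose_mul_self Pi0
    rwa [hPi0H, hPi0idem] at h
  have hPisum : Pi0 + Pi1 = 1 := by
    rw [hPi0def, hPi1def, ← Matrix.kronecker_add, hancsum, Matrix.one_kronecker_one]
  have hPi1tilde : ∀ ρ : Matrix (Fin d) (Fin d) ℂ, Pi1 * tilde ρ = 0 := by
    intro ρ
    rw [hPi1def, tilde, ← Matrix.mul_kronecker_mul, Matrix.one_mul, hanc10,
      Matrix.kronecker_zero]
  have htracetilde : ∀ ρ : Matrix (Fin d) (Fin d) ℂ, (tilde ρ).trace = ρ.trace := by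
    intro ρ
    rw [tilde, Matrix.trace_kronecker]
    have h : (ancProj 0).trace = 1 := by
      simp [ancProj, Matrix.trace, Matrix.diag, Matrix.single, Matrix.of_apply,
        Fin.sum_univ_two]
    rw [h, mul_one]
  -- the unitary V diagonalizing H
  set V : Matrix (Fin d × Fin 2) (Fin d × Fin 2) ℂ := Matrix.of (fun i j => v j i) with hVdef
  have hVc : Vᴴ * V = 1 := by
    ext i j
    have h := hv i j
    simpa [Matrix.mul_apply, Matrix.conjTranspose_apply, Matrix.one_apply, hVdef,
      dotProduct] using h
  have hVV : V * Vᴴ = 1 := mul_eq_one_comm.mp hVc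
  have hHd : H = V * diagonal (fun k => ((E k : ℝ) : ℂ)) * Vᴴ := by
    rw [hH]
    ext i j
    rw [Matrix.mul_apply]
    simp only [Matrix.mul_diagonal, Matrix.conjTranspose_apply, hVdef, Matrix.of_apply,
      Matrix.sum_apply, Matrix.smul_apply, Matrix.vecMulVec_apply, smul_eq_mul,
      Pi.star_apply, RCLike.star_def]
    apply Finset.sum_congr rfl
    intro k _
    ring
  set w : Fin d × Fin 2 → ℂ := fun k => Complex.exp ((-(t * E k) : ℝ) * Complex.I) with hwdef
  have hUd : U = V * diagonal w * Vᴴ := by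
    have hsm : (-(Complex.I * (t:ℂ))) • H
        = V * diagonal (fun k => ((-(t * E k) : ℝ) * Complex.I)) * Vᴴ := by
      rw [hHd]
      have h2 : (fun k : Fin d × Fin 2 => ((-(t * E k) : ℝ) * Complex.I))
          = (-(Complex.I * (t:ℂ))) • (fun k : Fin d × Fin 2 => ((E k : ℝ) : ℂ)) := by
        funext k
        simp only [Pi.smul_apply, smul_eq_mul]
        push_cast
        ring
      rw [h2, Matrix.diagonal_smul, Matrix.mul_smul, Matrix.smul_mul]
    have hinvert : Invertible V := ⟨Vᴴ, hVc, hVV⟩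
    have hinv : V⁻¹ = Vᴴ := Matrix.inv_eq_left_inv hVc
    have hunit : IsUnit V := isUnit_of_invertible V
    have hde : (NormedSpace.exp (fun k : Fin d × Fin 2 => ((-(t * E k) : ℝ) * Complex.I)))
        = w := by
      funext k
      rw [Pi.coe_exp, ← Complex.exp_eq_exp_ℂ]
    rw [hU, hsm, ← hinv, Matrix.exp_conj V _ hunit, Matrix.exp_diagonal, hinv, hde]
  have hwconj : ∀ k, starRingEnd ℂ (w k) * w k = 1 := by
    intro k
    simp only [hwdef]
    rw [← Complex.exp_conj, _root_.map_mul, Complex.conj_ofReal, Complex.conj_I,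
      ← Complex.exp_add]
    have hz : ((-(t * E k) : ℝ) : ℂ) * -Complex.I + ((-(t * E k) : ℝ) : ℂ) * Complex.I = 0 := by
      ring
    rw [hz, Complex.exp_zero]
  have hUct : Uᴴ = V * diagonal (fun k => starRingEnd ℂ (w k)) * Vᴴ := by
    rw [hUd, conj_diag_ct]
  have hUU : Uᴴ * U = 1 := by
    rw [hUct, hUd, conj_diag_mul hVc]
    have h : (fun i => starRingEnd ℂ (w i) * w i) = fun _ => (1:ℂ) := funext hwconj
    rw [h]
    have hd1 : diagonal (fun _ : Fin d × Fin 2 => (1:ℂ)) = 1 := Matrix.diagonal_one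
    rw [hd1, Matrix.mul_one, hVV]
  have h1V : (1 : Matrix (Fin d × Fin 2) (Fin d × Fin 2) ℂ)
      = V * diagonal (fun _ => (1:ℂ)) * Vᴴ := by
    rw [Matrix.diagonal_one, Matrix.mul_one, hVV]
  have hCd : U - 1 = V * diagonal (fun k => w k - 1) * Vᴴ := by
    rw [hUd]
    have hds : diagonal (fun k => w k - 1)
        = diagonal w - diagonal (fun _ : Fin d × Fin 2 => (1:ℂ)) := by
      rw [Matrix.diagonal_sub]
    rw [hds, Matrix.mul_sub, Matrix.sub_mul, ← h1V]
  have hCC : (U - 1)ᴴ * (U - 1)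
      = V * diagonal (fun k => ((2 - 2 * Real.cos (t * E k) : ℝ) : ℂ)) * Vᴴ := by
    rw [hCd, conj_diag_ct, conj_diag_mul hVc]
    have hfe : (fun i => starRingEnd ℂ (w i - 1) * (w i - 1))
        = fun k : Fin d × Fin 2 => ((2 - 2 * Real.cos (t * E k) : ℝ) : ℂ) := by
      funext k
      have h2 := Complex.add_conj (w k)
      have h3 : (w k).re = Real.cos (t * E k) := by
        simp only [hwdef]
        rw [Complex.exp_ofReal_mul_I_re, Real.cos_neg]
      have h4 : starRingEnd ℂ (w k - 1) * (w k - 1)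
          = starRingEnd ℂ (w k) * w k - (w k + starRingEnd ℂ (w k)) + 1 := by
        rw [_root_.map_sub, _root_.map_one]; ring
      rw [h4, hwconj k, h2, h3]
      push_cast
      ring
    rw [hfe]
  -- spectral decomposition of A
  set W : Matrix (Fin d × Fin 2) (Fin d × Fin 2) ℂ := (hA.eigenvectorUnitary : Matrix (Fin d × Fin 2) (Fin d × Fin 2) ℂ)
    with hWdef
  set a : Fin d × Fin 2 → ℝ := hA.eigenvalues with hadef
  have hWc : Wᴴ * W = 1 := by
    have h := Matrix.UnitaryGroup.star_mul_self hA.eigenvectorUnitary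
    rwa [Matrix.star_eq_conjTranspose] at h
  have hspec : A = W * diagonal (fun i => ((a i : ℝ) : ℂ)) * Wᴴ := by
    have h := hA.spectral_theorem
    rw [Unitary.conjStarAlgAut_apply] at h
    rw [← Matrix.star_eq_conjTranspose]
    exact h
  have hPdef : posPart' A hA = W * diagonal (fun i => ((max (a i) 0 : ℝ) : ℂ)) * Wᴴ := by
    rw [posPart', Matrix.star_eq_conjTranspose, hWdef]
  have hAbsdef : absPart' A hA = W * diagonal (fun i => ((|a i| : ℝ) : ℂ)) * Wᴴ := by
    rw [absPart', Matrix.star_eq_conjTranspose, hWdef]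
  set N : Matrix (Fin d × Fin 2) (Fin d × Fin 2) ℂ :=
    W * diagonal (fun i => ((|a i| - max (a i) 0 : ℝ) : ℂ)) * Wᴴ with hNdef
  have hPN : A = posPart' A hA - N := by
    rw [hPdef, hNdef, hspec, ← Matrix.sub_mul, ← Matrix.mul_sub, Matrix.diagonal_sub]
    have hfe : (fun i => ((a i : ℝ) : ℂ))
        = fun i => ((max (a i) 0 : ℝ) : ℂ) - ((|a i| - max (a i) 0 : ℝ) : ℂ) := by
      funext i
      rw [← Complex.ofReal_sub, Complex.ofReal_inj]
      rcases le_total (a i) 0 with h | h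
      · rw [abs_of_nonpos h, max_eq_right h]; try ring
      · rw [abs_of_nonneg h, max_eq_left h]; try ring
    rw [hfe]
  have h2P : absPart' A hA + A = posPart' A hA + posPart' A hA := by
    rw [hPdef, hAbsdef, hspec, ← Matrix.add_mul, ← Matrix.mul_add, Matrix.diagonal_add,
      ← Matrix.add_mul, ← Matrix.mul_add, Matrix.diagonal_add]
    have hfe : (fun i => ((|a i| : ℝ) : ℂ) + ((a i : ℝ) : ℂ))
        = fun i => ((max (a i) 0 : ℝ) : ℂ) + ((max (a i) 0 : ℝ) : ℂ) := by
      funext i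
      rw [← Complex.ofReal_add, ← Complex.ofReal_add, Complex.ofReal_inj]
      rcases le_total (a i) 0 with h | h
      · rw [abs_of_nonpos h, max_eq_right h]; try ring
      · rw [abs_of_nonneg h, max_eq_left h]; try ring
    rw [hfe]
  have hPpsd : (posPart' A hA).PosSemidef := by
    rw [hPdef]
    refine Matrix.PosSemidef.mul_mul_conjTranspose_same (Matrix.PosSemidef.diagonal ?_) W
    intro i
    exact Complex.zero_le_real.2 (le_max_right _ _)
  have hNpsd : N.PosSemidef := by
    rw [hNdef]
    refine Matrix.PosSemidef.mul_mul_conjTranspose_same (Matrix.PosSemidef.diagonal ?_) W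
    intro i
    refine Complex.zero_le_real.2 ?_
    rcases le_total (a i) 0 with h | h
    · rw [abs_of_nonpos h, max_eq_right h]; linarith
    · rw [abs_of_nonneg h, max_eq_left h]; linarith
  have hPi1A : Pi1 * A = 0 := by
    rw [hAdef, Matrix.mul_sub, Matrix.mul_smul, Matrix.mul_smul, hPi1tilde, hPi1tilde]
    simp only [smul_zero, sub_zero]
  have hPi1P : Pi1 * posPart' A hA = 0 := by
    rw [hPdef]
    refine pi_mul_spectral (a := fun i => ((a i : ℝ) : ℂ)) hWc ?_ ?_
    · rw [← hspec]; exact hPi1A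
    · intro k hk
      rw [Complex.ofReal_eq_zero] at hk ⊢
      rw [hk]
      exact max_self 0
  have hPH : (posPart' A hA)ᴴ = posPart' A hA := by
    rw [hPdef, conj_diag_ct]
    have hfe : (fun i => starRingEnd ℂ (((max (a i) 0 : ℝ)) : ℂ))
        = fun i => (((max (a i) 0 : ℝ)) : ℂ) := by
      funext i
      exact Complex.conj_ofReal _
    rw [hfe]
  have hPPi1 : posPart' A hA * Pi1 = 0 := by
    have h := congrArg Matrix.conjTranspose hPi1P
    rwa [Matrix.conjTranspose_mul, hPH, hPi1H, Matrix.conjTranspose_zero] at h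
  have htrU : ∀ ρ : Matrix (Fin d) (Fin d) ℂ, ρ.trace = 1 → (U * tilde ρ * Uᴴ).trace = 1 := by
    intro ρ hρ
    rw [Matrix.trace_mul_cycle, hUU, Matrix.one_mul, htracetilde, hρ]
  have hUAU : U * A * Uᴴ = (pmin : ℂ) • (U * tilde ρmin * Uᴴ)
      - (pmax : ℂ) • (U * tilde ρmax * Uᴴ) := by
    rw [hAdef, Matrix.mul_sub, Matrix.sub_mul, Matrix.mul_smul, Matrix.smul_mul,
      Matrix.mul_smul, Matrix.smul_mul]
  have hLHS : (pmax : ℂ) * (Pi0 * (U * tilde ρmax * Uᴴ)).trace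
      + (pmin : ℂ) * (Pi1 * (U * tilde ρmin * Uᴴ)).trace
      = (pmax : ℂ) + (Pi1 * (U * A * Uᴴ)).trace := by
    have hPi0eq : Pi0 = 1 - Pi1 := eq_sub_of_add_eq hPisum
    rw [hPi0eq, Matrix.sub_mul, Matrix.one_mul, Matrix.trace_sub,
      htrU ρmax htrmax, hUAU, Matrix.mul_sub, Matrix.mul_smul, Matrix.mul_smul,
      Matrix.trace_sub, Matrix.trace_smul, Matrix.trace_smul]
    simp only [smul_eq_mul]
    ring
  rw [hLHS]
  -- RHS bracket equals 2 tr(H P)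
  have hHA : (H * A).trace = (pmin : ℂ) * (H * tilde ρmin).trace
      - (pmax : ℂ) * (H * tilde ρmax).trace := by
    rw [hAdef, Matrix.mul_sub, Matrix.mul_smul, Matrix.mul_smul, Matrix.trace_sub,
      Matrix.trace_smul, Matrix.trace_smul]
    simp only [smul_eq_mul]
  have hbracket : (H * absPart' A hA).trace + (pmin : ℂ) * (H * tilde ρmin).trace
      - (pmax : ℂ) * (H * tilde ρmax).trace
      = 2 * (H * posPart' A hA).trace := by
    calc (H * absPart' A hA).trace + (pmin : ℂ) * (H * tilde ρmin).trace
        - (pmax : ℂ) * (H * tilde ρmax).trace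
        = (H * absPart' A hA).trace + (H * A).trace := by rw [hHA]; ring
      _ = (H * (absPart' A hA + A)).trace := by rw [Matrix.mul_add, Matrix.trace_add]
      _ = (H * (posPart' A hA + posPart' A hA)).trace := by rw [h2P]
      _ = 2 * (H * posPart' A hA).trace := by
          rw [Matrix.mul_add, Matrix.trace_add]; ring
  rw [add_sub_assoc] at hbracket ⊢
  rw [hbracket]
  have hcoef : (((g * t / 2 : ℝ)) : ℂ) * (2 * (H * posPart' A hA).trace)
      = ((g * t : ℝ) : ℂ) * (H * posPart' A hA).trace := by
    push_cast
    ring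
  rw [hcoef]
  refine add_le_add_right ?_ _
  -- main chain
  set P : Matrix (Fin d × Fin 2) (Fin d × Fin 2) ℂ := posPart' A hA with hPP
  have hTA : (Pi1 * (U * A * Uᴴ)).trace
      = (Pi1 * (U * P * Uᴴ)).trace - (Pi1 * (U * N * Uᴴ)).trace := by
    have h : U * A * Uᴴ = U * P * Uᴴ - U * N * Uᴴ := by
      rw [hPN, Matrix.mul_sub, Matrix.sub_mul]
    rw [h, Matrix.mul_sub, Matrix.trace_sub]
  have hTN : 0 ≤ (Pi1 * (U * N * Uᴴ)).trace :=
    trace_mul_nonneg' hPi1psd (hNpsd.mul_mul_conjTranspose_same U)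
  have hz1 : (Pi1 * (U * P)).trace = 0 := by
    rw [Matrix.trace_mul_comm, Matrix.mul_assoc, hPPi1, Matrix.mul_zero, Matrix.trace_zero]
  have hz2 : (Pi1 * (P * Uᴴ)).trace = 0 := by
    rw [← Matrix.mul_assoc, hPi1P, Matrix.zero_mul, Matrix.trace_zero]
  have hz3 : (Pi1 * P).trace = 0 := by rw [hPi1P, Matrix.trace_zero]
  have hexpand : (U - 1) * P * (U - 1)ᴴ
      = U * P * Uᴴ - U * P - P * Uᴴ + P := by
    rw [Matrix.conjTranspose_sub, Matrix.conjTranspose_one]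
    noncomm_ring
  have h3 : (Pi1 * (U * P * Uᴴ)).trace = (Pi1 * ((U - 1) * P * (U - 1)ᴴ)).trace := by
    rw [hexpand, Matrix.mul_add, Matrix.mul_sub, Matrix.mul_sub, Matrix.trace_add,
      Matrix.trace_sub, Matrix.trace_sub, hz1, hz2, hz3]
    ring
  set X : Matrix (Fin d × Fin 2) (Fin d × Fin 2) ℂ := (U - 1) * P * (U - 1)ᴴ with hXdef
  have hXpsd : X.PosSemidef := hPpsd.mul_mul_conjTranspose_same (U - 1)
  have h4 : (Pi1 * X).trace ≤ X.trace := by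
    have h0' : 0 ≤ (Pi0 * X).trace := trace_mul_nonneg' hPi0psd hXpsd
    have hsplit : (Pi0 * X).trace + (Pi1 * X).trace = X.trace := by
      rw [← Matrix.trace_add, ← Matrix.add_mul, hPisum, Matrix.one_mul]
    calc (Pi1 * X).trace = X.trace - (Pi0 * X).trace := by rw [← hsplit]; ring
      _ ≤ X.trace := sub_le_self _ h0'
  have h5 : X.trace = (P * ((U - 1)ᴴ * (U - 1))).trace := by
    rw [hXdef, Matrix.trace_mul_cycle, Matrix.trace_mul_comm]
  set Q : Matrix (Fin d × Fin 2) (Fin d × Fin 2) ℂ := Vᴴ * P * V with hQdef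
  have hQpsd : Q.PosSemidef := hPpsd.conjTranspose_mul_mul_same V
  have hPdiag : ∀ f : Fin d × Fin 2 → ℂ,
      (P * (V * diagonal f * Vᴴ)).trace = ∑ k, Q k k * f k := by
    intro f
    have h : P * (V * diagonal f * Vᴴ) = (P * (V * diagonal f)) * Vᴴ := by
      simp only [Matrix.mul_assoc]
    rw [h, Matrix.trace_mul_comm]
    have h2 : Vᴴ * (P * (V * diagonal f)) = Q * diagonal f := by
      rw [hQdef]; simp only [Matrix.mul_assoc]
    rw [h2, trace_diag_right]
  have h6 : (P * ((U - 1)ᴴ * (U - 1))).trace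
      = ∑ k, Q k k * ((2 - 2 * Real.cos (t * E k) : ℝ) : ℂ) := by
    rw [hCC, hPdiag]
  have h7 : (H * P).trace = ∑ k, Q k k * ((E k : ℝ) : ℂ) := by
    rw [Matrix.trace_mul_comm, hHd, hPdiag]
  have h8 : ∑ k, Q k k * ((2 - 2 * Real.cos (t * E k) : ℝ) : ℂ)
      ≤ ∑ k, ((g * t : ℝ) : ℂ) * (Q k k * ((E k : ℝ) : ℂ)) := by
    apply Finset.sum_le_sum
    intro k _
    have hq : 0 ≤ Q k k := diag_entry_nonneg hQpsd k
    have hsc : ((2 - 2 * Real.cos (t * E k) : ℝ) : ℂ) ≤ ((g * t : ℝ) : ℂ) * ((E k : ℝ) : ℂ) := by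
      rw [← Complex.ofReal_mul, Complex.real_le_real]
      calc 2 - 2 * Real.cos (t * E k) ≤ g * (t * E k) := hgs k
        _ = g * t * E k := by ring
    calc Q k k * ((2 - 2 * Real.cos (t * E k) : ℝ) : ℂ)
        ≤ Q k k * (((g * t : ℝ) : ℂ) * ((E k : ℝ) : ℂ)) :=
          mul_le_mul_of_nonneg_left hsc hq
      _ = ((g * t : ℝ) : ℂ) * (Q k k * ((E k : ℝ) : ℂ)) := by ring
  have h9 : ∑ k, ((g * t : ℝ) : ℂ) * (Q k k * ((E k : ℝ) : ℂ))
      = ((g * t : ℝ) : ℂ) * (H * P).trace := by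
    rw [h7, Finset.mul_sum]
  calc (Pi1 * (U * A * Uᴴ)).trace
      = (Pi1 * (U * P * Uᴴ)).trace - (Pi1 * (U * N * Uᴴ)).trace := hTA
    _ ≤ (Pi1 * (U * P * Uᴴ)).trace := sub_le_self _ hTN
    _ = (Pi1 * X).trace := h3
    _ ≤ X.trace := h4
    _ = (P * ((U - 1)ᴴ * (U - 1))).trace := h5
    _ = ∑ k, Q k k * ((2 - 2 * Real.cos (t * E k) : ℝ) : ℂ) := h6
    _ ≤ ∑ k, ((g * t : ℝ) : ℂ) * (Q k k * ((E k : ℝ) : ℂ)) := h8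
    _ = ((g * t : ℝ) : ℂ) * (H * P).trace := h9
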